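/- With F of characteristic 3, G = T_{3m}, m = 3k+1, and s the sum of all 3-elements of G, the ideal Ann_{FG}(s) satisfies Ann_{FG}(s)^3 = 0, i.e., the product of any three elements of Ann_{FG}(s) is zero. -/

import Mathlib

/-- Relations of the presentation `T_{3m} = ⟨x, y | x^m = y^3 = 1, y⁻¹xy = x^t⟩`. -/
def T3mRels (m t : ℕ) : Set (FreeGroup (Fin 2)) :=
  {FreeGroup.of 0 ^ m, FreeGroup.of 1 ^ 3,
   (FreeGroup.of 1)⁻¹ * FreeGroup.of 0 * FreeGroup.of 1 * (FreeGroup.of 0 ^ t)⁻¹}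

/-- The group `T_{3m}` given by the presentation `⟨x, y | x^m = y^3 = 1, y⁻¹xy = x^t⟩`. -/
abbrev T3m (m t : ℕ) : Type := PresentedGroup (T3mRels m t)

/-- The generator `x` of `T_{3m}`. -/
def xg (m t : ℕ) : T3m m t := PresentedGroup.of 0

/-- The generator `y` of `T_{3m}`. -/
def yg (m t : ℕ) : T3m m t := PresentedGroup.of 1
namespace T3mProof

open MonoidAlgebra Multiplicative SemidirectProduct

lemma pow_mod_eq {M : Type*} [Monoid M] (g : M) {d : ℕ} (hg : g ^ d = 1) (a : ℕ) :
    g ^ (a % d) = g ^ a := by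
  conv_rhs => rw [← Nat.div_add_mod a d]
  rw [pow_add, pow_mul, hg, one_pow, one_mul]

section Concrete
variable (m t : ℕ) [NeZero m] (h3 : (t : ZMod m) ^ 3 = 1)

def tauA : ZMod m ≃+ ZMod m where
  toFun a := (t : ZMod m) ^ 2 * a
  invFun a := (t : ZMod m) * a
  left_inv a := by
    show (t:ZMod m) * ((t:ZMod m)^2 * a) = a
    rw [← mul_assoc, ← pow_succ', h3, one_mul]
  right_inv a := by
    show (t:ZMod m)^2 * ((t:ZMod m) * a) = a
    rw [← mul_assoc, ← pow_succ, h3, one_mul]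
  map_add' a b := mul_add _ a b

def tauM : MulAut (Multiplicative (ZMod m)) := AddEquiv.toMultiplicative (tauA m t h3)

lemma tauM_apply (a : Multiplicative (ZMod m)) :
    tauM m t h3 a = ofAdd ((t:ZMod m)^2 * a.toAdd) := rfl

lemma tauM_inv_apply (a : Multiplicative (ZMod m)) :
    (tauM m t h3)⁻¹ a = ofAdd ((t:ZMod m) * a.toAdd) := rfl

lemma tauM_cube : tauM m t h3 ^ 3 = 1 := by
  apply MulEquiv.ext; intro a
  rw [pow_succ, pow_succ, pow_one, MulAut.mul_apply, MulAut.mul_apply, MulAut.one_apply,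
    tauM_apply, tauM_apply, tauM_apply]
  simp only [toAdd_ofAdd]
  have h6 : (t:ZMod m)^2 * ((t:ZMod m)^2 * ((t:ZMod m)^2 * a.toAdd)) = a.toAdd := by
    have h9 : ((t:ZMod m)^3)^2 = 1 := by rw [h3, one_pow]
    calc (t:ZMod m)^2 * ((t:ZMod m)^2 * ((t:ZMod m)^2 * a.toAdd))
        = ((t:ZMod m)^3)^2 * a.toAdd := by ring
      _ = a.toAdd := by rw [h9, one_mul]
  rw [h6, ofAdd_toAdd]

def phiK : Multiplicative (ZMod 3) →* MulAut (Multiplicative (ZMod m)) :=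
  MonoidHom.mk' (fun j => tauM m t h3 ^ (j.toAdd).val)
    (by
      intro a b
      show tauM m t h3 ^ (toAdd (a * b)).val
          = tauM m t h3 ^ (toAdd a).val * tauM m t h3 ^ (toAdd b).val
      rw [toAdd_mul, ZMod.val_add, pow_mod_eq _ (tauM_cube m t h3), pow_add])

abbrev Kgrp := (Multiplicative (ZMod m)) ⋊[phiK m t h3] Multiplicative (ZMod 3)

def fgen : Fin 2 → Kgrp m t h3 := ![inl (ofAdd 1), inr (ofAdd 1)]

lemma hrels : ∀ r ∈ T3mRels m t, FreeGroup.lift (fgen m t h3) r = 1 := by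
  intro r hr
  have hX : FreeGroup.lift (fgen m t h3) (FreeGroup.of 0)
      = inl (ofAdd (1:ZMod m)) := by simp [fgen]
  have hY : FreeGroup.lift (fgen m t h3) (FreeGroup.of 1)
      = inr (ofAdd (1:ZMod 3)) := by simp [fgen]
  simp only [T3mRels, Set.mem_insert_iff, Set.mem_singleton_iff] at hr
  rcases hr with rfl | rfl | rfl
  · rw [map_pow, hX, ← map_pow, ← ofAdd_nsmul, nsmul_eq_mul, mul_one,
      ZMod.natCast_self, ofAdd_zero, map_one]
  · rw [map_pow, hY, ← map_pow, ← ofAdd_nsmul, nsmul_eq_mul, mul_one,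
      ZMod.natCast_self, ofAdd_zero, map_one]
  · rw [map_mul, map_mul, map_mul, map_inv, map_inv, map_pow, hX, hY]
    rw [mul_inv_eq_one, ← map_inv, ← inl_aut_inv, ← map_pow]
    have hval : ((1 : ZMod 3)).val = 1 := by decide
    have hphi1 : phiK m t h3 (ofAdd 1) = tauM m t h3 := by
      show tauM m t h3 ^ (Multiplicative.toAdd (ofAdd (1 : ZMod 3))).val = _
      rw [toAdd_ofAdd, hval, pow_one]
    rw [hphi1, tauM_inv_apply, ← ofAdd_nsmul, toAdd_ofAdd, nsmul_eq_mul, mul_one]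

def psi : T3m m t →* Kgrp m t h3 := PresentedGroup.toGroup (hrels m t h3)

lemma psi_x : psi m t h3 (xg m t) = inl (ofAdd 1) := by
  show PresentedGroup.toGroup (hrels m t h3) (PresentedGroup.of 0) = _
  rw [PresentedGroup.toGroup.of]
  rfl

lemma psi_y : psi m t h3 (yg m t) = inr (ofAdd 1) := by
  show PresentedGroup.toGroup (hrels m t h3) (PresentedGroup.of 1) = _
  rw [PresentedGroup.toGroup.of]
  rfl

include h3 in
lemma dist (i j : ℕ) (hi : i < m) (hj : j < 3)
    (h : xg m t ^ i * yg m t ^ j = 1) : i = 0 ∧ j = 0 := by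
  have h2 := congrArg (psi m t h3) h
  have hXp : (inl (ofAdd (1:ZMod m)) : Kgrp m t h3) ^ i = inl ((ofAdd (1:ZMod m)) ^ i) :=
    (map_pow inl _ i).symm
  have hYp : (inr (ofAdd (1:ZMod 3)) : Kgrp m t h3) ^ j = inr ((ofAdd (1:ZMod 3)) ^ j) :=
    (map_pow inr _ j).symm
  rw [map_one, map_mul, map_pow, map_pow, psi_x, psi_y, hXp, hYp] at h2
  have hL := congrArg SemidirectProduct.left h2
  have hR := congrArg SemidirectProduct.right h2
  simp only [mul_left, mul_right, left_inl, right_inl, left_inr, right_inr,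
    one_left, one_right, map_one, MulAut.one_apply, mul_one, one_mul] at hL hR
  have hi0 : (i : ZMod m) = 0 := by
    have := congrArg Multiplicative.toAdd hL
    rwa [toAdd_pow, toAdd_ofAdd, toAdd_one, nsmul_eq_mul, mul_one] at this
  have hj0 : (j : ZMod 3) = 0 := by
    have := congrArg Multiplicative.toAdd hR
    rwa [toAdd_pow, toAdd_ofAdd, toAdd_one, nsmul_eq_mul, mul_one] at this
  exact ⟨Nat.eq_zero_of_dvd_of_lt ((ZMod.natCast_eq_zero_iff i m).mp hi0) hi,
    Nat.eq_zero_of_dvd_of_lt ((ZMod.natCast_eq_zero_iff j 3).mp hj0) hj⟩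

end Concrete


theorem keylemma (F : Type*) [Field F] [CharP F 3] {G : Type*} [Group G] (x y : G)
    (m t k : ℕ) (hm : m = 3 * k + 1) (ht : t ^ 3 % m = 1 % m)
    (hx : x ^ m = 1) (hy3 : y ^ 3 = 1) (hconj : y⁻¹ * x * y = x ^ t)
    (hgen : Subgroup.closure ({x, y} : Set G) = ⊤)
    (hdist : ∀ i j : ℕ, i < m → j < 3 → x ^ i * y ^ j = 1 → i = 0 ∧ j = 0)
    (α β γ : MonoidAlgebra F G)
    (hα : α * ((∑ i ∈ Finset.range m, MonoidAlgebra.of F G (x ^ i)) * MonoidAlgebra.of F G y⁻¹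
        + 1 + (∑ i ∈ Finset.range m, MonoidAlgebra.of F G (x ^ i)) * MonoidAlgebra.of F G y) = 0)
    (hβ : β * ((∑ i ∈ Finset.range m, MonoidAlgebra.of F G (x ^ i)) * MonoidAlgebra.of F G y⁻¹
        + 1 + (∑ i ∈ Finset.range m, MonoidAlgebra.of F G (x ^ i)) * MonoidAlgebra.of F G y) = 0)
    (hγ : γ * ((∑ i ∈ Finset.range m, MonoidAlgebra.of F G (x ^ i)) * MonoidAlgebra.of F G y⁻¹
        + 1 + (∑ i ∈ Finset.range m, MonoidAlgebra.of F G (x ^ i)) * MonoidAlgebra.of F G y) = 0) :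
    α * β * γ = 0 := by
  classical
  have m0 : 0 < m := by omega
  have h3F : (3 : F) = 0 := by exact_mod_cast CharP.cast_eq_zero F 3
  haveI : Fact (Nat.Prime 3) := ⟨by norm_num⟩
  haveI hchar : CharP (MonoidAlgebra F G) 3 := charP_of_injective_algebraMap' F 3
  have h3A : (3 : MonoidAlgebra F G) = 0 := by
    exact_mod_cast CharP.cast_eq_zero (MonoidAlgebra F G) 3
  have h3z : ∀ z : MonoidAlgebra F G, z + z + z = 0 := by
    intro z
    have hz : (3 : MonoidAlgebra F G) * z = 0 := by rw [h3A, zero_mul]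
    calc z + z + z = (3 : MonoidAlgebra F G) * z := by
          rw [show (3 : MonoidAlgebra F G) = 1 + 1 + 1 by norm_num, add_mul, add_mul, one_mul]
      _ = 0 := hz
  set E : MonoidAlgebra F G := ∑ i ∈ Finset.range m, MonoidAlgebra.of F G (x ^ i) with hE
  set oy : MonoidAlgebra F G := MonoidAlgebra.of F G y with hoy
  set S : MonoidAlgebra F G := E * MonoidAlgebra.of F G y⁻¹ + 1 + E * oy with hS
  -- basic identities
  have hxmod : ∀ a : ℕ, x ^ (a % m) = x ^ a := by
    intro a
    conv_rhs => rw [← Nat.div_add_mod a m]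
    rw [pow_add, pow_mul, hx, one_pow, one_mul]
  have hx1e : MonoidAlgebra.of F G x * E = E := by
    rw [hE, Finset.mul_sum]
    rw [Finset.sum_congr rfl (fun i _ => by
      rw [← map_mul, ← pow_succ'] :
        ∀ i ∈ Finset.range m, MonoidAlgebra.of F G x * MonoidAlgebra.of F G (x ^ i)
          = MonoidAlgebra.of F G (x ^ (i + 1)))]
    have h2 := Finset.sum_range_succ' (fun i => MonoidAlgebra.of F G (x ^ i)) m
    have h3' := Finset.sum_range_succ (fun i => MonoidAlgebra.of F G (x ^ i)) m
    have hfm : MonoidAlgebra.of F G (x ^ m) = MonoidAlgebra.of F G (x ^ 0) := by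
      rw [hx, pow_zero]
    rw [h3', hfm, pow_zero] at h2
    exact (add_right_cancel h2).symm
  have hxe : ∀ i : ℕ, MonoidAlgebra.of F G (x ^ i) * E = E := by
    intro i
    induction i with
    | zero => rw [pow_zero, map_one, one_mul]
    | succ n ih => rw [pow_succ', map_mul, mul_assoc, ih, hx1e]
  have hmF : ((m : ℕ) : F) = 1 := by rw [hm]; push_cast; rw [h3F]; ring
  have hee : E * E = E := by
    conv_lhs => rw [hE]
    rw [Finset.sum_mul, Finset.sum_congr rfl (fun i _ => hxe i), Finset.sum_const,
      Finset.card_range, ← Nat.cast_smul_eq_nsmul F, hmF, one_smul]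
  -- commuting of E with oy
  have hxiy : ∀ i : ℕ, x ^ i * y = y * x ^ (t * i) := by
    intro i
    induction i with
    | zero => rw [pow_zero, one_mul, Nat.mul_zero, pow_zero, mul_one]
    | succ n ih =>
      have hxy : x * y = y * x ^ t := by
        rw [← hconj]; group
      rw [Nat.mul_succ, pow_succ, mul_assoc, hxy, ← mul_assoc, ih, mul_assoc, ← pow_add]
  have hsum_t : ∑ i ∈ Finset.range m, MonoidAlgebra.of F G (x ^ (t * i)) = E := by
    rw [hE]
    refine Finset.sum_nbij' (fun i => t * i % m) (fun i => t ^ 2 * i % m) ?_ ?_ ?_ ?_ ?_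
    · intro a _; exact Finset.mem_range.mpr (Nat.mod_lt _ m0)
    · intro a _; exact Finset.mem_range.mpr (Nat.mod_lt _ m0)
    · intro a ha
      show t ^ 2 * (t * a % m) % m = a
      have e1 : t ^ 2 * (t * a % m) ≡ t ^ 3 * a [MOD m] := by
        calc t ^ 2 * (t * a % m) ≡ t ^ 2 * (t * a) [MOD m] :=
              Nat.ModEq.mul_left _ (Nat.mod_modEq _ _)
          _ = t ^ 3 * a := by ring
      have e2 : t ^ 3 * a ≡ 1 * a [MOD m] := Nat.ModEq.mul_right a ht
      have e3 : t ^ 2 * (t * a % m) % m = a % m := by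
        have := e1.trans e2
        rwa [one_mul] at this
      rw [e3, Nat.mod_eq_of_lt (Finset.mem_range.mp ha)]
    · intro a ha
      show t * (t ^ 2 * a % m) % m = a
      have e1 : t * (t ^ 2 * a % m) ≡ t ^ 3 * a [MOD m] := by
        calc t * (t ^ 2 * a % m) ≡ t * (t ^ 2 * a) [MOD m] :=
              Nat.ModEq.mul_left _ (Nat.mod_modEq _ _)
          _ = t ^ 3 * a := by ring
      have e2 : t ^ 3 * a ≡ 1 * a [MOD m] := Nat.ModEq.mul_right a ht
      have e3 : t * (t ^ 2 * a % m) % m = a % m := by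
        have := e1.trans e2
        rwa [one_mul] at this
      rw [e3, Nat.mod_eq_of_lt (Finset.mem_range.mp ha)]
    · intro a _
      show MonoidAlgebra.of F G (x ^ (t * a)) = MonoidAlgebra.of F G (x ^ (t * a % m))
      rw [hxmod]
  have hc1 : oy * E = E * oy := by
    have h1 : E * oy = oy * E := by
      calc E * oy = ∑ i ∈ Finset.range m, MonoidAlgebra.of F G (x ^ i) * oy := by
            rw [hE, Finset.sum_mul]
        _ = ∑ i ∈ Finset.range m, oy * MonoidAlgebra.of F G (x ^ (t * i)) := by
            refine Finset.sum_congr rfl fun i _ => ?_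
            rw [hoy, ← map_mul, ← map_mul, hxiy]
        _ = oy * ∑ i ∈ Finset.range m, MonoidAlgebra.of F G (x ^ (t * i)) := by
            rw [Finset.mul_sum]
        _ = oy * E := by rw [hsum_t]
    exact h1.symm
  have he2 : ∀ z : MonoidAlgebra F G, E * (E * z) = E * z := fun z => by
    rw [← mul_assoc, hee]
  have hc2 : ∀ z : MonoidAlgebra F G, oy * (E * z) = E * (oy * z) := fun z => by
    rw [← mul_assoc, hc1, mul_assoc]
  -- y⁻¹ = y * y
  have hy2 : y⁻¹ = y * y := by
    have h' : y * y * y = 1 := by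
      have := hy3
      rw [pow_succ, pow_two] at this
      exact this
    exact inv_eq_of_mul_eq_one_left h'
  have hS2 : S = E * (oy * oy) + 1 + E * oy := by
    rw [hS, hy2, map_mul, ← hoy]
  -- nn and its powers
  set nn : MonoidAlgebra F G := E * oy - E with hnn
  have hnnN : nn * nn = E * (oy * oy) - E * oy - E * oy + E := by
    rw [hnn]
    simp only [mul_sub, sub_mul, mul_one, one_mul, mul_assoc, hc1, hc2, he2, hee]
    abel
  have hseN : S * E = E * (oy * oy) + E + E * oy := by
    rw [hS2]
    simp only [add_mul, mul_one, one_mul, mul_assoc, hc1, hc2, he2, hee]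
  have hse : S * E = nn * nn := by
    rw [hseN, hnnN]
    have h' : E * (oy * oy) - E * oy - E * oy + E
        = E * (oy * oy) + E + E * oy - (E * oy + E * oy + E * oy) := by abel
    rw [h', h3z, sub_zero]
  have hs1e : S * (1 - E) = 1 - E := by
    rw [mul_sub, mul_one, hseN, hS2]
    abel
  have hoy3 : oy * (oy * oy) = 1 := by
    rw [hoy, ← map_mul, ← map_mul]
    have h' : y * (y * y) = y ^ 3 := by rw [pow_succ, pow_two]; group
    rw [h', hy3, map_one]
  have hnnn : nn * (nn * nn) = 0 := by
    rw [hnnN]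
    rw [show nn = E * oy - E from hnn]
    have expand : (E * oy - E) * (E * (oy * oy) - E * oy - E * oy + E)
        = (E * oy + E * oy + E * oy) - (E * (oy * oy) + E * (oy * oy) + E * (oy * oy)) := by
      simp only [mul_sub, sub_mul, mul_add, add_mul, mul_one, one_mul, mul_assoc,
        hc1, hc2, he2, hee, hoy3]
      abel
    rw [expand, h3z, h3z, sub_zero]
  have hne : E * nn = nn := by rw [hnn, mul_sub, ← mul_assoc, hee]
  have hnn2e : E * (nn * nn) = nn * nn := by rw [← mul_assoc, hne]
  -- the span M
  set M : Submodule F (MonoidAlgebra F G) := Submodule.span F {E, nn, nn * nn} with hM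
  have heM : E ∈ M := Submodule.subset_span (by simp)
  have hnM : nn ∈ M := Submodule.subset_span (by simp)
  have hn2M : nn * nn ∈ M := Submodule.subset_span (by simp)
  have act : ∀ c : MonoidAlgebra F G, c * E ∈ M → c * nn ∈ M → c * (nn * nn) ∈ M →
      ∀ v ∈ M, c * v ∈ M := by
    intro c h1 h2 h3 v hv
    refine Submodule.span_induction ?_ ?_ ?_ ?_ hv
    · intro z hz
      rcases hz with rfl | rfl | rfl
      exacts [h1, h2, h3]
    · rw [mul_zero]; exact zero_mem M
    · intro u v _ _ hu' hv'; rw [mul_add]; exact add_mem hu' hv'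
    · intro a u _ hu'; rw [mul_smul_comm]; exact Submodule.smul_mem M a hu'
  -- base cases
  have bx : MonoidAlgebra.of F G x * E = E := hx1e
  have bxn : MonoidAlgebra.of F G x * nn = nn := by
    rw [hnn, mul_sub, ← mul_assoc, bx]
  have bxn2 : MonoidAlgebra.of F G x * (nn * nn) = nn * nn := by
    rw [← mul_assoc, bxn]
  have bxi : MonoidAlgebra.of F G x⁻¹ * E = E := by
    conv_lhs => rw [← bx]
    rw [← mul_assoc, ← map_mul, inv_mul_cancel, map_one, one_mul]
  have bxin : MonoidAlgebra.of F G x⁻¹ * nn = nn := by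
    rw [hnn, mul_sub, ← mul_assoc, bxi]
  have bxin2 : MonoidAlgebra.of F G x⁻¹ * (nn * nn) = nn * nn := by
    rw [← mul_assoc, bxin]
  have bye : oy * E = nn + E := by
    rw [hc1, hnn]; abel
  have byn : oy * nn = nn * nn + nn := by
    rw [hnnN, hnn]
    simp only [mul_sub, sub_mul, mul_add, add_mul, mul_one, one_mul, mul_assoc,
      hc1, hc2, he2, hee, hoy3]
    abel
  have byn2 : oy * (nn * nn) = nn * nn := by
    have expand : oy * (nn * nn) = nn * nn
        + ((E * oy + E * oy + E * oy) - (E * (oy * oy) + E * (oy * oy) + E * (oy * oy))) := by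
      rw [hnnN]
      simp only [mul_sub, sub_mul, mul_add, add_mul, mul_one, one_mul, mul_assoc,
        hc1, hc2, he2, hee, hoy3]
      abel
    rw [expand, h3z, h3z, sub_zero, add_zero]
  have acty : ∀ v ∈ M, oy * v ∈ M := by
    refine act oy ?_ ?_ ?_
    · rw [bye]; exact add_mem hnM heM
    · rw [byn]; exact add_mem hn2M hnM
    · rw [byn2]; exact hn2M
  have Hg : ∀ g : G, ∀ v ∈ M, MonoidAlgebra.of F G g * v ∈ M := by
    have main : ∀ g : G, (∀ v ∈ M, MonoidAlgebra.of F G g * v ∈ M)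
        ∧ (∀ v ∈ M, MonoidAlgebra.of F G g⁻¹ * v ∈ M) := by
      intro g
      have hgmem : g ∈ Subgroup.closure ({x, y} : Set G) := by
        rw [hgen]; exact Subgroup.mem_top g
      refine Subgroup.closure_induction ?_ ?_ ?_ ?_ hgmem
      · intro z hz
        rcases hz with rfl | rfl
        · exact ⟨act _ (by rw [bx]; exact heM) (by rw [bxn]; exact hnM)
              (by rw [bxn2]; exact hn2M),
            act _ (by rw [bxi]; exact heM) (by rw [bxin]; exact hnM)
              (by rw [bxin2]; exact hn2M)⟩
        · refine ⟨acty, ?_⟩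
          intro v hv
          have : MonoidAlgebra.of F G z⁻¹ * v = oy * (oy * v) := by
            rw [hy2, map_mul, mul_assoc, ← hoy]
          rw [this]
          exact acty _ (acty v hv)
      · constructor <;> intro v hv <;> simp only [inv_one, map_one, one_mul] <;> exact hv
      · intro g h _ _ pg ph
        constructor
        · intro v hv; rw [map_mul, mul_assoc]; exact pg.1 _ (ph.1 v hv)
        · intro v hv; rw [mul_inv_rev, map_mul, mul_assoc]; exact ph.2 _ (pg.2 v hv)
      · intro g _ pg
        exact ⟨pg.2, fun v hv => by rw [inv_inv]; exact pg.1 v hv⟩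
    exact fun g => (main g).1
  have hmem : ∀ u : MonoidAlgebra F G, u * E ∈ M := by
    intro u
    induction u using MonoidAlgebra.induction with
    | zero => rw [zero_mul]; exact zero_mem M
    | single_add g c f hg hc ih =>
      rw [add_mul]
      refine add_mem ?_ ih
      have hsingle : (MonoidAlgebra.single g c : MonoidAlgebra F G)
          = c • MonoidAlgebra.of F G g := by
        rw [MonoidAlgebra.smul_of]
      rw [hsingle, smul_mul_assoc]
      exact Submodule.smul_mem M c (Hg g E heM)
  -- nn * nn ≠ 0
  have hform : nn * nn = ∑ j ∈ Finset.range 3, ∑ i ∈ Finset.range m,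
      MonoidAlgebra.single (x ^ i * y ^ j) (1 : F) := by
    rw [← hse, hseN]
    have t0 : E = ∑ i ∈ Finset.range m, MonoidAlgebra.single (x ^ i * y ^ 0) (1 : F) := by
      rw [hE]
      refine Finset.sum_congr rfl fun i _ => ?_
      rw [pow_zero, mul_one, MonoidAlgebra.of_apply]
    have t1 : E * oy = ∑ i ∈ Finset.range m, MonoidAlgebra.single (x ^ i * y ^ 1) (1 : F) := by
      rw [hE, Finset.sum_mul]
      refine Finset.sum_congr rfl fun i _ => ?_
      rw [hoy, ← map_mul, pow_one, MonoidAlgebra.of_apply]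
    have t2 : E * (oy * oy) = ∑ i ∈ Finset.range m,
        MonoidAlgebra.single (x ^ i * y ^ 2) (1 : F) := by
      rw [hE, Finset.sum_mul]
      refine Finset.sum_congr rfl fun i _ => ?_
      rw [hoy, ← map_mul, ← map_mul, ← pow_two, MonoidAlgebra.of_apply]
    rw [Finset.sum_range_succ, Finset.sum_range_succ, Finset.sum_range_succ,
      Finset.sum_range_zero, zero_add, ← t0, ← t1, ← t2]
    abel
  have hnn2ne : nn * nn ≠ 0 := by
    intro h0
    have hval : (nn * nn).coeff (1 : G) = 1 := by
      rw [hform, MonoidAlgebra.coeff_sum, Finset.sum_apply']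
      have hj : ∀ j ∈ Finset.range 3,
          ((∑ i ∈ Finset.range m, MonoidAlgebra.single (x ^ i * y ^ j) (1 : F)).coeff (1 : G))
            = if j = 0 then (1 : F) else 0 := by
        intro j hjr
        rw [MonoidAlgebra.coeff_sum, Finset.sum_apply']
        by_cases hj0 : j = 0
        · subst hj0
          rw [if_pos rfl]
          rw [Finset.sum_eq_single_of_mem 0 (Finset.mem_range.mpr m0)]
          · rw [MonoidAlgebra.coeff_single_apply, if_pos (by rw [pow_zero, pow_zero, one_mul])]
          · intro b hb hb0
            rw [MonoidAlgebra.coeff_single_apply, if_neg]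
            intro hcontr'
            exact hb0 (hdist b 0 (Finset.mem_range.mp hb) (by norm_num) hcontr').1
        · rw [if_neg hj0]
          refine Finset.sum_eq_zero fun i hi => ?_
          rw [MonoidAlgebra.coeff_single_apply, if_neg]
          intro hcontr'
          exact hj0 (hdist i j (Finset.mem_range.mp hi) (Finset.mem_range.mp hjr) hcontr').2
      rw [Finset.sum_congr rfl hj]
      rw [Finset.sum_range_succ, Finset.sum_range_succ, Finset.sum_range_succ,
        Finset.sum_range_zero]
      norm_num
    rw [h0, MonoidAlgebra.coeff_zero, Finsupp.zero_apply] at hval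
    exact zero_ne_one hval
  -- decomposition of annihilator elements
  have decomp : ∀ u : MonoidAlgebra F G, u * S = 0 →
      ∃ b c : F, u = b • nn + c • (nn * nn) := by
    intro u hu
    have hue : u = u * E := by
      have h0' : u * (1 - E) = 0 := by rw [← hs1e, ← mul_assoc, hu, zero_mul]
      rw [mul_sub, mul_one, sub_eq_zero] at h0'
      exact h0'
    have hun : u * (nn * nn) = 0 := by rw [← hse, ← mul_assoc, hu, zero_mul]
    have huM : u ∈ M := by rw [hue]; exact hmem u
    rw [hM] at huM
    obtain ⟨a, z, hz, hu_eq⟩ := Submodule.mem_span_insert.mp huM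
    obtain ⟨b, c, hbc⟩ := Submodule.mem_span_pair.mp hz
    have ha0 : a = 0 := by
      have h1 : u * (nn * nn) = a • (nn * nn) := by
        rw [hu_eq, ← hbc, add_mul, add_mul, smul_mul_assoc, smul_mul_assoc, smul_mul_assoc,
          hnn2e, hnnn, show (nn * nn) * (nn * nn) = 0 by rw [mul_assoc, hnnn, mul_zero],
          smul_zero, smul_zero, add_zero, add_zero]
      rw [hun] at h1
      rcases smul_eq_zero.mp h1.symm with h | h
      · exact h
      · exact absurd h hnn2ne
    exact ⟨b, c, by rw [hu_eq, ← hbc, ha0, zero_smul, zero_add]⟩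
  obtain ⟨b1, c1, hα'⟩ := decomp α hα
  obtain ⟨b2, c2, hβ'⟩ := decomp β hβ
  obtain ⟨b3, c3, hγ'⟩ := decomp γ hγ
  have z2 : (nn * nn) * nn = 0 := by rw [mul_assoc, hnnn]
  have z3 : (nn * nn) * (nn * nn) = 0 := by rw [mul_assoc, hnnn, mul_zero]
  rw [hα', hβ', hγ']
  have step1 : (b1 • nn + c1 • (nn * nn)) * (b2 • nn + c2 • (nn * nn))
      = (b1 * b2) • (nn * nn) := by
    simp only [add_mul, mul_add, smul_mul_assoc, mul_smul_comm, smul_smul,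
      hnnn, z2, z3, smul_zero, add_zero, zero_add]
    rw [mul_comm b2 b1]
  rw [step1]
  simp only [mul_add, smul_mul_assoc, mul_smul_comm, smul_smul, z2, z3,
    smul_zero, add_zero, zero_add]

end T3mProof

/-- For `F` of characteristic 3, `G = T_{3m}` and `s` the sum of all 3-elements of `G`,
the product of any three elements of `Ann_{FG}(s)` vanishes: `Ann_{FG}(s)³ = 0`. -/
theorem ann_s_cube_zero (F : Type*) [Field F] [CharP F 3] (m t k : ℕ) (ht1 : 1 ≤ t)
    (hm : m = 3 * k + 1) (ht : t ^ 3 % m = 1 % m) (hgcd : Nat.gcd m (t - 1) = 1) :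
    letI G := T3m m t
    letI xhat : MonoidAlgebra F G := ∑ i ∈ Finset.range m, MonoidAlgebra.of F G (xg m t ^ i)
    letI s : MonoidAlgebra F G :=
      xhat * MonoidAlgebra.of F G (yg m t)⁻¹ + 1 + xhat * MonoidAlgebra.of F G (yg m t)
    ∀ α β γ : MonoidAlgebra F G,
      (α * s = 0 ∧ s * α = 0) → (β * s = 0 ∧ s * β = 0) → (γ * s = 0 ∧ s * γ = 0) →
        α * β * γ = 0 := by
  intro α β γ hA hB hC
  haveI : NeZero m := ⟨by omega⟩
  have h3 : (t : ZMod m) ^ 3 = 1 := by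
    have h := (ZMod.natCast_eq_natCast_iff (t ^ 3) 1 m).mpr ht
    push_cast at h
    exact h
  have hxm : xg m t ^ m = 1 := by
    show PresentedGroup.mk (T3mRels m t) (FreeGroup.of 0) ^ m = 1
    rw [← map_pow]
    exact (QuotientGroup.eq_one_iff _).mpr
      (Subgroup.subset_normalClosure (Set.mem_insert _ _))
  have hym : yg m t ^ 3 = 1 := by
    show PresentedGroup.mk (T3mRels m t) (FreeGroup.of 1) ^ 3 = 1
    rw [← map_pow]
    exact (QuotientGroup.eq_one_iff _).mpr
      (Subgroup.subset_normalClosure (Set.mem_insert_iff.mpr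
        (Or.inr (Set.mem_insert _ _))))
  have hconj : (yg m t)⁻¹ * xg m t * yg m t = xg m t ^ t := by
    have h1 : (yg m t)⁻¹ * xg m t * yg m t * (xg m t ^ t)⁻¹ = 1 := by
      show (PresentedGroup.mk (T3mRels m t) (FreeGroup.of 1))⁻¹
          * PresentedGroup.mk (T3mRels m t) (FreeGroup.of 0)
          * PresentedGroup.mk (T3mRels m t) (FreeGroup.of 1)
          * (PresentedGroup.mk (T3mRels m t) (FreeGroup.of 0) ^ t)⁻¹ = 1
      rw [← map_pow, ← map_inv, ← map_inv, ← map_mul, ← map_mul, ← map_mul]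
      exact (QuotientGroup.eq_one_iff _).mpr
        (Subgroup.subset_normalClosure (Set.mem_insert_iff.mpr
          (Or.inr (Set.mem_insert_iff.mpr (Or.inr rfl)))))
    exact mul_inv_eq_one.mp h1
  have hgen : Subgroup.closure ({xg m t, yg m t} : Set (T3m m t)) = ⊤ := by
    have h := PresentedGroup.closure_range_of (T3mRels m t)
    have hr : (Set.range (PresentedGroup.of : Fin 2 → T3m m t))
        = {xg m t, yg m t} := by
      ext g
      constructor
      · rintro ⟨i, rfl⟩
        fin_cases i
        · exact Set.mem_insert _ _
        · exact Set.mem_insert_iff.mpr (Or.inr rfl)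
      · rintro (rfl | rfl)
        exacts [⟨0, rfl⟩, ⟨1, rfl⟩]
    rw [← hr]
    exact h
  exact T3mProof.keylemma F (xg m t) (yg m t) m t k hm ht hxm hym hconj hgen
    (fun i j hi hj hij => T3mProof.dist m t h3 i j hi hj hij) α β γ hA.1 hB.1 hC.1
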